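/- arXiv:2202.12277 — 6 statements merged into one kernel-verified Lean document; each statement's English description precedes it below -/
import Mathlib

section
/- Let X ⊆ ℝⁿ and Y ⊆ ℝᵐ be nonempty convex compact sets and F : X × Y → ℝ be such that x ↦ F(x,y) is convex for every y ∈ Y and y ↦ F(x,y) is concave for every x ∈ X. Let T ≥ 1 and let x_1,…,x_T ∈ X, y_1,…,y_T ∈ Y, f_1,…,f_T ∈ ℝⁿ, g_1,…,g_T ∈ ℝᵐ satisfy, for every t: F(x, y_t) ≥ F(x_t, y_t) + ⟨f_t, x − x_t⟩ for all x ∈ X, and F(x_t, y) ≤ F(x_t, y_t) + ⟨g_t, y − y_t⟩ for all y ∈ Y. Set x̄_T = (1/T)∑_{t=1}^T x_t and ȳ_T = (1/T)∑_{t=1}^T y_t. Then sup_{y∈Y} F(x̄_T, y) − inf_{x∈X} F(x, ȳ_T) ≤ (R_{T,x} + R_{T,y})/T, where R_{T,x} = ∑_{t=1}^T ⟨f_t, x_t⟩ − inf_{x∈X} ∑_{t=1}^T ⟨f_t, x⟩ and R_{T,y} = sup_{y∈Y} ∑_{t=1}^T ⟨g_t, y⟩ − ∑_{t=1}^T ⟨g_t,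 y_t⟩. -/
set_option autoImplicit false

open scoped RealInnerProductSpace
open Finset

/-- Theorem 1, folk theorem: the duality gap of the uniform average
iterates is bounded by the sum of the two players' regrets divided by `T`. -/
theorem stmt0 {n m : ℕ}
    (X : Set (EuclideanSpace ℝ (Fin n))) (Y : Set (EuclideanSpace ℝ (Fin m)))
    (hXne : X.Nonempty) (hXcv : Convex ℝ X) (hXcp : IsCompact X)
    (hYne : Y.Nonempty) (hYcv : Convex ℝ Y) (hYcp : IsCompact Y)
    (F : EuclideanSpace ℝ (Fin n) → EuclideanSpace ℝ (Fin m) → ℝ)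
    (hFcv : ∀ y ∈ Y, ConvexOn ℝ X (fun x => F x y))
    (hFcc : ∀ x ∈ X, ConcaveOn ℝ Y (fun y => F x y))
    (T : ℕ) (hT : 1 ≤ T)
    (x : ℕ → EuclideanSpace ℝ (Fin n)) (y : ℕ → EuclideanSpace ℝ (Fin m))
    (f : ℕ → EuclideanSpace ℝ (Fin n)) (g : ℕ → EuclideanSpace ℝ (Fin m))
    (hx : ∀ t ∈ Icc 1 T, x t ∈ X) (hy : ∀ t ∈ Icc 1 T, y t ∈ Y)
    (hf : ∀ t ∈ Icc 1 T, ∀ x' ∈ X, F (x t) (y t) + ⟪f t, x' - x t⟫ ≤ F x' (y t))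
    (hg : ∀ t ∈ Icc 1 T, ∀ y' ∈ Y, F (x t) y' ≤ F (x t) (y t) + ⟪g t, y' - y t⟫) :
    (⨆ yy : Y, F ((T : ℝ)⁻¹ • ∑ t ∈ Icc 1 T, x t) yy)
        - (⨅ xx : X, F xx ((T : ℝ)⁻¹ • ∑ t ∈ Icc 1 T, y t))
      ≤ ((∑ t ∈ Icc 1 T, ⟪f t, x t⟫
            - ⨅ xx : X, ∑ t ∈ Icc 1 T, ⟪f t, (xx : EuclideanSpace ℝ (Fin n))⟫)
          + ((⨆ yy : Y, ∑ t ∈ Icc 1 T, ⟪g t, (yy : EuclideanSpace ℝ (Fin m))⟫)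
            - ∑ t ∈ Icc 1 T, ⟪g t, y t⟫)) / T := by

  have hTpos : (0:ℝ) < T := by exact_mod_cast Nat.lt_of_lt_of_le Nat.zero_lt_one hT
  have hTne : (T:ℝ) ≠ 0 := ne_of_gt hTpos
  have hcard : (Icc 1 T).card = T := by simp
  have hwsum : ∑ _t ∈ Icc 1 T, (T:ℝ)⁻¹ = 1 := by
    rw [Finset.sum_const, hcard, nsmul_eq_mul]
    field_simp
  have hwpos : ∀ t ∈ Icc 1 T, (0:ℝ) ≤ (T:ℝ)⁻¹ := fun t _ => by positivity
  set xb := (T : ℝ)⁻¹ • ∑ t ∈ Icc 1 T, x t with hxbdef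
  set yb := (T : ℝ)⁻¹ • ∑ t ∈ Icc 1 T, y t with hybdef
  have hxb : xb = ∑ t ∈ Icc 1 T, (T:ℝ)⁻¹ • x t := by rw [hxbdef, Finset.smul_sum]
  have hyb : yb = ∑ t ∈ Icc 1 T, (T:ℝ)⁻¹ • y t := by rw [hybdef, Finset.smul_sum]
  have hxbX : xb ∈ X := hxb ▸ hXcv.sum_mem hwpos hwsum hx
  have hybY : yb ∈ Y := hyb ▸ hYcv.sum_mem hwpos hwsum hy
  set C := ∑ t ∈ Icc 1 T, F (x t) (y t) with hC
  set A := ∑ t ∈ Icc 1 T, ⟪f t, x t⟫ with hA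
  set B := ∑ t ∈ Icc 1 T, ⟪g t, y t⟫ with hB
  -- pointwise upper bound for F xb y'
  have hup : ∀ y' ∈ Y, F xb y' ≤ (T:ℝ)⁻¹ * (C + (∑ t ∈ Icc 1 T, ⟪g t, y'⟫) - B) := by
    intro y' hy'
    have h1 : F xb y' ≤ ∑ t ∈ Icc 1 T, (T:ℝ)⁻¹ * F (x t) y' := by
      rw [hxb]; exact (hFcv y' hy').map_sum_le hwpos hwsum hx
    have h2 : ∑ t ∈ Icc 1 T, (T:ℝ)⁻¹ * F (x t) y'
        ≤ ∑ t ∈ Icc 1 T, (T:ℝ)⁻¹ * (F (x t) (y t) + ⟪g t, y'⟫ - ⟪g t, y t⟫) := by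
      refine Finset.sum_le_sum fun t ht => ?_
      have := hg t ht y' hy'
      rw [inner_sub_right] at this
      nlinarith [hwpos t ht]
    calc F xb y' ≤ _ := h1
      _ ≤ _ := h2
      _ = (T:ℝ)⁻¹ * (C + (∑ t ∈ Icc 1 T, ⟪g t, y'⟫) - B) := by
          rw [← Finset.mul_sum, hC, hB, ← Finset.sum_add_distrib, ← Finset.sum_sub_distrib]
  -- pointwise lower bound for F x' yb
  have hlo : ∀ x' ∈ X, (T:ℝ)⁻¹ * (C - A + ∑ t ∈ Icc 1 T, ⟪f t, x'⟫) ≤ F x' yb := by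
    intro x' hx'
    have h1 : ∑ t ∈ Icc 1 T, (T:ℝ)⁻¹ * F x' (y t) ≤ F x' yb := by
      rw [hyb]; exact (hFcc x' hx').le_map_sum hwpos hwsum hy
    have h2 : ∑ t ∈ Icc 1 T, (T:ℝ)⁻¹ * (F (x t) (y t) - ⟪f t, x t⟫ + ⟪f t, x'⟫)
        ≤ ∑ t ∈ Icc 1 T, (T:ℝ)⁻¹ * F x' (y t) := by
      refine Finset.sum_le_sum fun t ht => ?_
      have := hf t ht x' hx'
      rw [inner_sub_right] at this
      nlinarith [hwpos t ht]
    calc (T:ℝ)⁻¹ * (C - A + ∑ t ∈ Icc 1 T, ⟪f t, x'⟫)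
        = ∑ t ∈ Icc 1 T, (T:ℝ)⁻¹ * (F (x t) (y t) - ⟪f t, x t⟫ + ⟪f t, x'⟫) := by
          rw [← Finset.mul_sum, hC, hA, ← Finset.sum_sub_distrib, ← Finset.sum_add_distrib]
      _ ≤ _ := h2
      _ ≤ _ := h1
  haveI : Nonempty Y := hYne.to_subtype
  haveI : Nonempty X := hXne.to_subtype
  -- bddAbove for the g-sup, bddBelow for the f-inf
  have hgcont : Continuous (fun y' : EuclideanSpace ℝ (Fin m) => ∑ t ∈ Icc 1 T, ⟪g t, y'⟫) :=
    continuous_finset_sum _ fun t _ => (continuous_const.inner continuous_id)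
  have hfcont : Continuous (fun x' : EuclideanSpace ℝ (Fin n) => ∑ t ∈ Icc 1 T, ⟪f t, x'⟫) :=
    continuous_finset_sum _ fun t _ => (continuous_const.inner continuous_id)
  have hbddg : BddAbove (Set.range fun yy : Y => ∑ t ∈ Icc 1 T, ⟪g t, (yy : EuclideanSpace ℝ (Fin m))⟫) := by
    refine (hYcp.image hgcont).bddAbove.mono ?_
    rintro _ ⟨yy, rfl⟩
    exact ⟨yy, yy.2, rfl⟩
  have hbddf : BddBelow (Set.range fun xx : X => ∑ t ∈ Icc 1 T, ⟪f t, (xx : EuclideanSpace ℝ (Fin n))⟫) := by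
    refine (hXcp.image hfcont).bddBelow.mono ?_
    rintro _ ⟨xx, rfl⟩
    exact ⟨xx, xx.2, rfl⟩
  set Ry := ⨆ yy : Y, ∑ t ∈ Icc 1 T, ⟪g t, (yy : EuclideanSpace ℝ (Fin m))⟫ with hRy
  set Rx := ⨅ xx : X, ∑ t ∈ Icc 1 T, ⟪f t, (xx : EuclideanSpace ℝ (Fin n))⟫ with hRx
  have hS : (⨆ yy : Y, F xb yy) ≤ (T:ℝ)⁻¹ * (C + Ry - B) := by
    refine ciSup_le fun yy => ?_
    have h1 := hup yy yy.2
    have h2 : ∑ t ∈ Icc 1 T, ⟪g t, (yy : EuclideanSpace ℝ (Fin m))⟫ ≤ Ry :=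
      le_ciSup hbddg yy
    refine h1.trans ?_
    have h0 : (0:ℝ) ≤ (T:ℝ)⁻¹ := by positivity
    gcongr
  have hI : (T:ℝ)⁻¹ * (C - A + Rx) ≤ ⨅ xx : X, F xx yb := by
    refine le_ciInf fun xx => ?_
    have h1 := hlo xx xx.2
    have h2 : Rx ≤ ∑ t ∈ Icc 1 T, ⟪f t, (xx : EuclideanSpace ℝ (Fin n))⟫ :=
      ciInf_le hbddf xx
    refine le_trans ?_ h1
    have h0 : (0:ℝ) ≤ (T:ℝ)⁻¹ := by positivity
    gcongr
  have key : ((A - Rx) + (Ry - B)) / T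
      = (T:ℝ)⁻¹ * (C + Ry - B) - (T:ℝ)⁻¹ * (C - A + Rx) := by
    field_simp
    ring
  rw [key]
  linarith
end

section
/- Let X ⊆ ℝⁿ be a nonempty convex compact set with κ = max_{x∈X} ‖x‖₂ > 0, C = cone({κ} × X) ⊆ ℝ^{n+1} and C° its polar cone. Let T ≥ 1, nonnegative weights θ_1,…,θ_T, losses f_1,…,f_T ∈ ℝⁿ, decisions x_1,…,x_T ∈ X, and set v_t = (⟨f_t, x_t⟩/κ, −f_t) ∈ ℝ × ℝⁿ = ℝ^{n+1}. Then ∑_{t=1}^T θ_t ⟨f_t, x_t⟩ − inf_{x∈X} ∑_{t=1}^T θ_t ⟨f_t, x⟩ ≤ √2 · κ · d(∑_{t=1}^T θ_t v_t, C°), where d(u, S) = inf{‖u − z‖₂ : z ∈ S}. -/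
set_option autoImplicit false

open scoped RealInnerProductSpace
open Finset

noncomputable section

/-- The lifted vector `(t, y) ∈ ℝ × ℝⁿ = ℝ^{n+1}`. -/
def pr {n : ℕ} (t : ℝ) (y : EuclideanSpace ℝ (Fin n)) :
    EuclideanSpace ℝ (Fin (n + 1)) :=
  WithLp.toLp 2 (Fin.cons t (fun i => y i) : Fin (n + 1) → ℝ)

/-- The conic hull `cone({κ} × X) = {α • (κ, x) : α ≥ 0, x ∈ X}`. -/
def coneLift {n : ℕ} (κ : ℝ) (X : Set (EuclideanSpace ℝ (Fin n))) :
    Set (EuclideanSpace ℝ (Fin (n + 1))) :=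
  {u | ∃ α : ℝ, 0 ≤ α ∧ ∃ x ∈ X, u = α • pr κ x}

/-- The polar cone `C° = {z : ⟨z, w⟩ ≤ 0 ∀ w ∈ C}`. -/
def polarCone {E : Type*} [NormedAddCommGroup E] [InnerProductSpace ℝ E]
    (C : Set E) : Set E :=
  {z | ∀ w ∈ C, ⟪z, w⟫ ≤ 0}

lemma inner_pr {n : ℕ} (a b : ℝ) (y z : EuclideanSpace ℝ (Fin n)) :
    ⟪pr a y, pr b z⟫ = a * b + ⟪y, z⟫ := by
  simp [pr, PiLp.inner_apply, Fin.sum_univ_succ, RCLike.inner_apply, mul_comm]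

/-- the weighted regret is bounded by `√2 · κ` times the Euclidean
distance of the weighted aggregate payoff `∑ θ_t v_t` to the polar cone `C°`,
where `v_t = (⟨f_t, x_t⟩/κ, −f_t)`. -/
theorem stmt3 {n : ℕ} (X : Set (EuclideanSpace ℝ (Fin n)))
    (hXne : X.Nonempty) (hXcv : Convex ℝ X) (hXcp : IsCompact X)
    (κ : ℝ) (hκ : IsGreatest ((fun x => ‖x‖) '' X) κ) (hκpos : 0 < κ)
    (T : ℕ) (hT : 1 ≤ T) (θ : ℕ → ℝ) (hθ : ∀ t ∈ Icc 1 T, 0 ≤ θ t)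
    (f x : ℕ → EuclideanSpace ℝ (Fin n)) (hx : ∀ t ∈ Icc 1 T, x t ∈ X) :
    (∑ t ∈ Icc 1 T, θ t * ⟪f t, x t⟫)
        - (⨅ xx : X, ∑ t ∈ Icc 1 T, θ t * ⟪f t, (xx : EuclideanSpace ℝ (Fin n))⟫)
      ≤ Real.sqrt 2 * κ *
        Metric.infDist (∑ t ∈ Icc 1 T, θ t • pr (⟪f t, x t⟫ / κ) (-(f t)))
          (polarCone (coneLift κ X)) := by
  classical
  set S := polarCone (coneLift κ X) with hS
  set u := ∑ t ∈ Icc 1 T, θ t • pr (⟪f t, x t⟫ / κ) (-(f t)) with hu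
  have hSne : S.Nonempty := ⟨0, fun w hw => by simp⟩
  have hc : (0:ℝ) < Real.sqrt 2 * κ :=
    mul_pos (Real.sqrt_pos.mpr two_pos) hκpos
  haveI : Nonempty X := hXne.to_subtype
  rw [sub_le_comm]
  refine le_ciInf fun xx => ?_
  rw [sub_le_comm]
  set w : EuclideanSpace ℝ (Fin (n + 1)) := pr κ (xx : EuclideanSpace ℝ (Fin n)) with hw
  have hwC : w ∈ coneLift κ X := ⟨1, zero_le_one, xx, xx.2, by simp [hw]⟩
  have huw : ⟪u, w⟫ =
      (∑ t ∈ Icc 1 T, θ t * ⟪f t, x t⟫)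
        - ∑ t ∈ Icc 1 T, θ t * ⟪f t, (xx : EuclideanSpace ℝ (Fin n))⟫ := by
    rw [hu, sum_inner, ← Finset.sum_sub_distrib]
    refine Finset.sum_congr rfl fun t ht => ?_
    rw [real_inner_smul_left, hw, inner_pr, div_mul_cancel₀ _ hκpos.ne']
    rw [inner_neg_left]
    ring
  have hxxle : ‖(xx : EuclideanSpace ℝ (Fin n))‖ ≤ κ := hκ.2 ⟨xx, xx.2, rfl⟩
  have hwnorm : ‖w‖ ≤ Real.sqrt 2 * κ := by
    have h1 : ‖w‖ ^ 2 = κ * κ + ‖(xx : EuclideanSpace ℝ (Fin n))‖ ^ 2 := by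
      rw [← real_inner_self_eq_norm_sq, ← real_inner_self_eq_norm_sq, hw, inner_pr]
    have h2 : (Real.sqrt 2 * κ) ^ 2 = 2 * κ ^ 2 := by
      rw [mul_pow, Real.sq_sqrt (by norm_num : (0:ℝ) ≤ 2)]
    nlinarith [norm_nonneg w, norm_nonneg (xx : EuclideanSpace ℝ (Fin n))]
  -- key: ⟪u, w⟫ ≤ (√2 κ) * dist u z for all z ∈ S
  have key : ∀ z ∈ S, ⟪u, w⟫ ≤ (Real.sqrt 2 * κ) * dist u z := by
    intro z hz
    have h1 : ⟪u, w⟫ = ⟪u - z, w⟫ + ⟪z, w⟫ := by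
      rw [inner_sub_left]; ring
    have h2 : ⟪z, w⟫ ≤ 0 := hz w hwC
    have h3 : ⟪u - z, w⟫ ≤ ‖u - z‖ * ‖w‖ := real_inner_le_norm _ _
    have h4 : ‖u - z‖ * ‖w‖ ≤ ‖u - z‖ * (Real.sqrt 2 * κ) :=
      mul_le_mul_of_nonneg_left hwnorm (norm_nonneg _)
    rw [dist_eq_norm]
    linarith [h4]
  have hfin : ⟪u, w⟫ ≤ (Real.sqrt 2 * κ) * Metric.infDist u S := by
    rw [← div_le_iff₀' hc]
    refine le_of_not_gt fun hlt => ?_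
    obtain ⟨z, hzS, hzd⟩ := (Metric.infDist_lt_iff hSne).mp hlt
    have := key z hzS
    rw [← div_le_iff₀' hc] at this
    exact absurd hzd (not_lt.mpr this)
  linarith [huw ▸ hfin]
end
end

section
/- Let X ⊆ ℝⁿ be a nonempty convex compact set with κ = max_{x∈X} ‖x‖₂ > 0 and C = cone({κ} × X) ⊆ ℝ^{n+1}. Let positive weights (ω_t), losses f_t ∈ ℝⁿ with ‖f_t‖₂ ≤ L, and decisions x_t ∈ X for t = 1,…,T, with v_t = (⟨f_t, x_t⟩/κ, −f_t), CBA iterates u_0 = 0 and u_t = u_{t−1} + ω_t v_t, and the CBA choice rule: for every t there exists α_t ≥ 0 with π_C(u_{t−1}) = α_t · (κ, x_t). Then the weighted average regret satisfies (∑_{t=1}^T ω_t ⟨f_t, x_t⟩ − inf_{x∈X} ∑_{t=1}^T ω_t ⟨f_t, x⟩) / (∑_{t=1}^T ω_t) ≤ 2 κ L √(∑_{t=1}^T ω_t²) / (∑_{t=1}^T ω_t). -/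
set_option autoImplicit false

open scoped RealInnerProductSpace
open Finset

noncomputable section

/-- `p` is the Euclidean orthogonal projection of `u` onto the set `S`. -/
def IsProjOn {E : Type*} [NormedAddCommGroup E] [InnerProductSpace ℝ E]
    (u : E) (S : Set E) (p : E) : Prop :=
  p ∈ S ∧ ∀ z ∈ S, dist u p ≤ dist u z

lemma pr_add {n : ℕ} (s t : ℝ) (y z : EuclideanSpace ℝ (Fin n)) :
    pr s y + pr t z = pr (s + t) (y + z) := by
  ext i; refine Fin.cases ?_ (fun j => ?_) i <;> simp [pr]

lemma pr_smul {n : ℕ} (c t : ℝ) (y : EuclideanSpace ℝ (Fin n)) :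
    c • pr t y = pr (c * t) (c • y) := by
  ext i; refine Fin.cases ?_ (fun j => ?_) i <;> simp [pr]

lemma inner_pr_pr {n : ℕ} (s t : ℝ) (y z : EuclideanSpace ℝ (Fin n)) :
    ⟪pr s y, pr t z⟫ = s * t + ⟪y, z⟫ := by
  simp only [PiLp.inner_apply, RCLike.inner_apply, starRingEnd_apply, star_trivial]
  rw [Fin.sum_univ_succ]
  simp [pr, mul_comm]

lemma norm_pr_sq {n : ℕ} (t : ℝ) (y : EuclideanSpace ℝ (Fin n)) :
    ‖pr t y‖ ^ 2 = t ^ 2 + ‖y‖ ^ 2 := by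
  rw [← real_inner_self_eq_norm_sq, ← real_inner_self_eq_norm_sq, inner_pr_pr, sq]

lemma zero_mem_coneLift {n : ℕ} (κ : ℝ) {X : Set (EuclideanSpace ℝ (Fin n))}
    (hXne : X.Nonempty) : 0 ∈ coneLift κ X := by
  obtain ⟨x, hx⟩ := hXne
  exact ⟨0, le_refl 0, x, hx, by simp⟩

lemma smul_mem_coneLift {n : ℕ} {κ : ℝ} {X : Set (EuclideanSpace ℝ (Fin n))}
    {w : EuclideanSpace ℝ (Fin (n + 1))} (hw : w ∈ coneLift κ X) {c : ℝ} (hc : 0 ≤ c) :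
    c • w ∈ coneLift κ X := by
  obtain ⟨α, hα, x, hx, rfl⟩ := hw
  exact ⟨c * α, mul_nonneg hc hα, x, hx, by rw [smul_smul]⟩

lemma coneLift_convex {n : ℕ} (κ : ℝ) {X : Set (EuclideanSpace ℝ (Fin n))}
    (hXcv : Convex ℝ X) : Convex ℝ (coneLift κ X) := by
  rintro w₁ ⟨α₁, hα₁, x₁, hx₁, rfl⟩ w₂ ⟨α₂, hα₂, x₂, hx₂, rfl⟩ a b ha hb hab
  rcases eq_or_lt_of_le (add_nonneg (mul_nonneg ha hα₁) (mul_nonneg hb hα₂)) with h0 | hpos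
  · have h1 : a * α₁ = 0 := by nlinarith [mul_nonneg ha hα₁, mul_nonneg hb hα₂]
    have h2 : b * α₂ = 0 := by nlinarith [mul_nonneg ha hα₁, mul_nonneg hb hα₂]
    refine ⟨0, le_refl 0, x₁, hx₁, ?_⟩
    rw [smul_smul, smul_smul, h1, h2]; simp
  · set β := a * α₁ + b * α₂ with hβ
    refine ⟨β, le_of_lt hpos, (a * α₁ / β) • x₁ + (b * α₂ / β) • x₂, ?_, ?_⟩
    · exact hXcv hx₁ hx₂ (div_nonneg (mul_nonneg ha hα₁) hpos.le)
        (div_nonneg (mul_nonneg hb hα₂) hpos.le)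
        (by field_simp; exact hβ.symm)
    · rw [smul_smul, smul_smul, pr_smul, pr_smul, pr_smul, pr_add]
      refine congrArg₂ pr (by ring) ?_
      match_scalars <;> field_simp

lemma isProjOn_inner {E : Type*} [NormedAddCommGroup E] [InnerProductSpace ℝ E]
    {u p : E} {S : Set E} (hS : Convex ℝ S) (h : IsProjOn u S p) :
    ∀ w ∈ S, ⟪u - p, w - p⟫ ≤ 0 := by
  obtain ⟨hp, hmin⟩ := h
  rw [← norm_eq_iInf_iff_real_inner_le_zero hS hp]
  haveI : Nonempty S := ⟨⟨p, hp⟩⟩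
  refine le_antisymm ?_ ?_
  · exact le_ciInf fun z => by simpa [dist_eq_norm] using hmin z z.2
  · have hbdd : BddBelow (Set.range fun w : S => ‖u - (w : E)‖) :=
      ⟨0, by rintro r ⟨z, rfl⟩; exact norm_nonneg _⟩
    exact ciInf_le hbdd ⟨p, hp⟩

/-- Projection onto the cone: the residual lies in the polar cone and is orthogonal to `p`. -/
lemma coneLift_proj_facts {n : ℕ} {κ : ℝ} {X : Set (EuclideanSpace ℝ (Fin n))}
    (hXne : X.Nonempty) (hXcv : Convex ℝ X)
    {u p : EuclideanSpace ℝ (Fin (n + 1))} (h : IsProjOn u (coneLift κ X) p) :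
    (u - p) ∈ polarCone (coneLift κ X) ∧ ⟪u - p, p⟫ = 0 := by
  have hvar := isProjOn_inner (coneLift_convex κ hXcv) h
  have hp := h.1
  have h0 : ⟪u - p, p⟫ ≥ 0 := by
    have := hvar 0 (zero_mem_coneLift κ hXne)
    rw [zero_sub, inner_neg_right] at this
    linarith
  have h2 : ⟪u - p, p⟫ ≤ 0 := by
    have := hvar ((2 : ℝ) • p) (smul_mem_coneLift hp (by norm_num))
    have h2p : (2 : ℝ) • p - p = p := by
      rw [two_smul]; abel
    rwa [h2p] at this
  have horth : ⟪u - p, p⟫ = 0 := le_antisymm h2 h0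
  refine ⟨fun w hw => ?_, horth⟩
  have := hvar w hw
  rw [inner_sub_right] at this
  linarith

/-- Moreau-type inequality: if `u = p + q` with `⟪q,p⟫ = 0` and `⟪z,p⟫ ≤ 0`,
then `‖p‖² ≤ ‖u - z‖²`. -/
lemma moreau_sq_le {E : Type*} [NormedAddCommGroup E] [InnerProductSpace ℝ E]
    {u p z : E} (horth : ⟪u - p, p⟫ = 0) (hzp : ⟪z, p⟫ ≤ 0) :
    ‖p‖ ^ 2 ≤ ‖u - z‖ ^ 2 := by
  have hdec : u - z = p + ((u - p) - z) := by abel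
  have e1 : ⟪p, u - p⟫ = 0 := by rw [real_inner_comm]; exact horth
  have e2 : ⟪p, z⟫ ≤ 0 := by rw [real_inner_comm]; exact hzp
  rw [hdec, norm_add_sq_real, inner_sub_right, e1]
  nlinarith [sq_nonneg ‖u - p - z‖, e2]

/-- Theorem 2, CBA regret bound: with iterates
`u_t = u_{t-1} + ω_t v_t` and decisions chosen by the CBA rule
`π_C(u_{t-1}) = α_t • (κ, x_t)`, the weighted average regret is at most
`2 κ L √(∑ ω_t²) / (∑ ω_t)`. -/
theorem stmt5 {n : ℕ} (X : Set (EuclideanSpace ℝ (Fin n)))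
    (hXne : X.Nonempty) (hXcv : Convex ℝ X) (hXcp : IsCompact X)
    (κ : ℝ) (hκ : IsGreatest ((fun x => ‖x‖) '' X) κ) (hκpos : 0 < κ)
    (T : ℕ) (hT : 1 ≤ T) (ω : ℕ → ℝ) (hω : ∀ t ∈ Icc 1 T, 0 < ω t)
    (f x : ℕ → EuclideanSpace ℝ (Fin n)) (hx : ∀ t ∈ Icc 1 T, x t ∈ X)
    (L : ℝ) (hL : ∀ t ∈ Icc 1 T, ‖f t‖ ≤ L)
    (v : ℕ → EuclideanSpace ℝ (Fin (n + 1)))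
    (hv : ∀ t, v t = pr (⟪f t, x t⟫ / κ) (-(f t)))
    (u : ℕ → EuclideanSpace ℝ (Fin (n + 1)))
    (hu0 : u 0 = 0) (hu : ∀ t ∈ Icc 1 T, u t = u (t - 1) + ω t • v t)
    (hchoice : ∀ t ∈ Icc 1 T, ∃ α : ℝ, 0 ≤ α ∧
      IsProjOn (u (t - 1)) (coneLift κ X) (α • pr κ (x t))) :
    ((∑ t ∈ Icc 1 T, ω t * ⟪f t, x t⟫)
          - ⨅ xx : X, ∑ t ∈ Icc 1 T, ω t * ⟪f t, (xx : EuclideanSpace ℝ (Fin n))⟫)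
        / (∑ t ∈ Icc 1 T, ω t)
      ≤ 2 * κ * L * Real.sqrt (∑ t ∈ Icc 1 T, ω t ^ 2) / (∑ t ∈ Icc 1 T, ω t) := by
  haveI : Nonempty X := hXne.to_subtype
  have hκne : κ ≠ 0 := ne_of_gt hκpos
  have hL0 : 0 ≤ L := le_trans (norm_nonneg (f 1)) (hL 1 (by simp [mem_Icc, hT]))
  have hxκ : ∀ t ∈ Icc 1 T, ‖x t‖ ≤ κ := fun t ht => hκ.2 ⟨x t, hx t ht, rfl⟩
  -- orthogonality of the payoff vector with the chosen cone direction
  have hvx : ∀ t ∈ Icc 1 T, ⟪pr κ (x t), v t⟫ = 0 := by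
    intro t ht
    rw [hv t, inner_pr_pr, inner_neg_right, real_inner_comm (x t) (f t)]
    field_simp
    ring
  -- payoff norm bound
  have hvnorm : ∀ t ∈ Icc 1 T, ‖v t‖ ^ 2 ≤ 2 * L ^ 2 := by
    intro t ht
    rw [hv t, norm_pr_sq, norm_neg]
    have habs : |⟪f t, x t⟫| ≤ L * κ :=
      le_trans (abs_real_inner_le_norm _ _)
        (mul_le_mul (hL t ht) (hxκ t ht) (norm_nonneg _) hL0)
    have hf := hL t ht
    have hf0 := norm_nonneg (f t)
    have h1 : (⟪f t, x t⟫ / κ) ^ 2 ≤ L ^ 2 := by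
      rw [div_pow, div_le_iff₀ (by positivity)]
      nlinarith [abs_nonneg ⟪f t, x t⟫, sq_abs ⟪f t, x t⟫]
    nlinarith
  -- the key invariant by induction
  have key : ∀ t, t ≤ T → ∃ z ∈ polarCone (coneLift κ X),
      ‖u t - z‖ ^ 2 ≤ ∑ s ∈ Icc 1 t, ω s ^ 2 * ‖v s‖ ^ 2 := by
    intro t
    induction t with
    | zero =>
      intro _
      refine ⟨0, fun w hw => by simp, ?_⟩
      simp [hu0]
    | succ t ih =>
      intro hst
      obtain ⟨z, hz, hbz⟩ := ih (le_trans (Nat.le_succ t) hst)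
      have hmem : t + 1 ∈ Icc 1 T := by
        rw [mem_Icc]; exact ⟨Nat.succ_le_succ (Nat.zero_le t), hst⟩
      obtain ⟨α, hα, hproj⟩ := hchoice (t + 1) hmem
      have hsub : t + 1 - 1 = t := rfl
      rw [hsub] at hproj
      set p := α • pr κ (x (t + 1)) with hp
      obtain ⟨hpolar, horth⟩ := coneLift_proj_facts hXne hXcv hproj
      refine ⟨u t - p, hpolar, ?_⟩
      have hrec : u (t + 1) = u t + ω (t + 1) • v (t + 1) := by
        have := hu (t + 1) hmem; rwa [hsub] at this
      have hstep : u (t + 1) - (u t - p) = p + ω (t + 1) • v (t + 1) := by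
        rw [hrec]; abel
      have hpv : ⟪p, v (t + 1)⟫ = 0 := by
        rw [hp, real_inner_smul_left, hvx (t + 1) hmem, mul_zero]
      have hnorm : ‖u (t + 1) - (u t - p)‖ ^ 2 = ‖p‖ ^ 2 + ω (t + 1) ^ 2 * ‖v (t + 1)‖ ^ 2 := by
        rw [hstep, norm_add_sq_real, real_inner_smul_right, hpv]
        simp only [norm_smul, Real.norm_eq_abs, mul_pow, sq_abs]
        ring
      have hmoreau : ‖p‖ ^ 2 ≤ ‖u t - z‖ ^ 2 :=
        moreau_sq_le horth (hz p hproj.1)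
      rw [hnorm, sum_Icc_succ_top (Nat.one_le_iff_ne_zero.mpr (Nat.succ_ne_zero t))]
      linarith
  -- u T is the weighted sum of payoffs
  have usum : ∀ t, t ≤ T → u t = ∑ s ∈ Icc 1 t, ω s • v s := by
    intro t
    induction t with
    | zero => intro _; simp [hu0]
    | succ t ih =>
      intro hst
      have hmem : t + 1 ∈ Icc 1 T := by
        rw [mem_Icc]; exact ⟨Nat.succ_le_succ (Nat.zero_le t), hst⟩
      have hrec := hu (t + 1) hmem
      rw [Nat.add_sub_cancel] at hrec
      rw [hrec, ih (le_trans (Nat.le_succ t) hst),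
        sum_Icc_succ_top (Nat.one_le_iff_ne_zero.mpr (Nat.succ_ne_zero t))]
  -- the per-point regret bound
  have hmain : ∀ xx ∈ X, (∑ t ∈ Icc 1 T, ω t * ⟪f t, x t⟫)
      - (∑ t ∈ Icc 1 T, ω t * ⟪f t, xx⟫)
      ≤ 2 * κ * L * Real.sqrt (∑ t ∈ Icc 1 T, ω t ^ 2) := by
    intro xx hxx
    have hrep : (∑ t ∈ Icc 1 T, ω t * ⟪f t, x t⟫) - (∑ t ∈ Icc 1 T, ω t * ⟪f t, xx⟫)
        = ⟪u T, pr κ xx⟫ := by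
      rw [usum T le_rfl, sum_inner, ← sum_sub_distrib]
      refine sum_congr rfl fun t ht => ?_
      rw [real_inner_smul_left, hv t, inner_pr_pr, inner_neg_left]
      field_simp
      ring
    obtain ⟨z, hz, hbz⟩ := key T le_rfl
    have hbz2 : ‖u T - z‖ ^ 2 ≤ 2 * L ^ 2 * ∑ t ∈ Icc 1 T, ω t ^ 2 := by
      calc ‖u T - z‖ ^ 2 ≤ ∑ s ∈ Icc 1 T, ω s ^ 2 * ‖v s‖ ^ 2 := hbz
        _ ≤ ∑ s ∈ Icc 1 T, ω s ^ 2 * (2 * L ^ 2) := by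
            refine sum_le_sum fun s hs => ?_
            exact mul_le_mul_of_nonneg_left (hvnorm s hs) (sq_nonneg _)
        _ = 2 * L ^ 2 * ∑ t ∈ Icc 1 T, ω t ^ 2 := by rw [← sum_mul]; ring
    have hprxx : ‖pr κ xx‖ ^ 2 ≤ 2 * κ ^ 2 := by
      rw [norm_pr_sq]
      have : ‖xx‖ ≤ κ := hκ.2 ⟨xx, hxx, rfl⟩
      nlinarith [norm_nonneg xx]
    have hprmem : pr κ xx ∈ coneLift κ X := ⟨1, zero_le_one, xx, hxx, by rw [one_smul]⟩
    have hinner : ⟪u T, pr κ xx⟫ ≤ ‖u T - z‖ * ‖pr κ xx‖ := by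
      have hdecomp : ⟪u T, pr κ xx⟫ = ⟪u T - z, pr κ xx⟫ + ⟪z, pr κ xx⟫ := by
        rw [← inner_add_left]; congr 1; abel
      calc ⟪u T, pr κ xx⟫ = ⟪u T - z, pr κ xx⟫ + ⟪z, pr κ xx⟫ := hdecomp
        _ ≤ ⟪u T - z, pr κ xx⟫ := by linarith [hz (pr κ xx) hprmem]
        _ ≤ ‖u T - z‖ * ‖pr κ xx‖ := real_inner_le_norm _ _
    have hS0 : (0 : ℝ) ≤ ∑ t ∈ Icc 1 T, ω t ^ 2 := sum_nonneg fun t _ => sq_nonneg _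
    have h1 : ‖u T - z‖ ≤ Real.sqrt (2 * L ^ 2 * ∑ t ∈ Icc 1 T, ω t ^ 2) := by
      have := Real.sqrt_le_sqrt hbz2
      rwa [Real.sqrt_sq (norm_nonneg _)] at this
    have h2 : ‖pr κ xx‖ ≤ Real.sqrt (2 * κ ^ 2) := by
      have := Real.sqrt_le_sqrt hprxx
      rwa [Real.sqrt_sq (norm_nonneg _)] at this
    have hprod : ‖u T - z‖ * ‖pr κ xx‖
        ≤ 2 * κ * L * Real.sqrt (∑ t ∈ Icc 1 T, ω t ^ 2) := by
      calc ‖u T - z‖ * ‖pr κ xx‖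
          ≤ Real.sqrt (2 * L ^ 2 * ∑ t ∈ Icc 1 T, ω t ^ 2) * Real.sqrt (2 * κ ^ 2) :=
            mul_le_mul h1 h2 (norm_nonneg _) (Real.sqrt_nonneg _)
        _ = Real.sqrt ((2 * L ^ 2 * ∑ t ∈ Icc 1 T, ω t ^ 2) * (2 * κ ^ 2)) :=
            (Real.sqrt_mul (by positivity) _).symm
        _ = Real.sqrt ((2 * κ * L) ^ 2 * ∑ t ∈ Icc 1 T, ω t ^ 2) := by ring_nf
        _ = 2 * κ * L * Real.sqrt (∑ t ∈ Icc 1 T, ω t ^ 2) := by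
            rw [Real.sqrt_mul (sq_nonneg _), Real.sqrt_sq (by positivity)]
    rw [hrep]
    exact le_trans hinner hprod
  -- conclude
  have hSpos : 0 < ∑ t ∈ Icc 1 T, ω t :=
    sum_pos hω (by rw [Finset.nonempty_Icc]; exact hT)
  rw [div_le_div_iff₀ hSpos hSpos]
  have hinf : (∑ t ∈ Icc 1 T, ω t * ⟪f t, x t⟫)
      - 2 * κ * L * Real.sqrt (∑ t ∈ Icc 1 T, ω t ^ 2)
      ≤ ⨅ xx : X, ∑ t ∈ Icc 1 T, ω t * ⟪f t, (xx : EuclideanSpace ℝ (Fin n))⟫ := by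
    refine le_ciInf fun xx => ?_
    have := hmain xx xx.2
    linarith
  nlinarith [hSpos]

end
end

section
/- Let X ⊆ ℝⁿ be a nonempty convex compact set with κ = max_{x∈X} ‖x‖₂ > 0, C = cone({κ} × X) ⊆ ℝ^{n+1} and C° its polar cone. Let positive payoff weights (ω_t) and positive decision weights (θ_t) satisfy θ_{t+1}/θ_t ≥ ω_{t+1}/ω_t for all t ≥ 1. Let f_t ∈ ℝⁿ and x_t ∈ X for t = 1,…,T, set v_t = (⟨f_t, x_t⟩/κ, −f_t), and define the CBA⁺ iterates u_0 = 0 and u_t = π_C(u_{t−1} + ω_t v_t). Then ∑_{t=1}^T θ_t v_t − (θ_T/ω_T) u_T ∈ C°, i.e., ∑_{t=1}^T θ_t v_t ≥_{C°} (θ_T/ω_T) u_T in the partial order induced by C°. -/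
set_option autoImplicit false

open scoped RealInnerProductSpace
open Finset

noncomputable section

lemma polar_add {E : Type*} [NormedAddCommGroup E] [InnerProductSpace ℝ E]
    {C : Set E} {a b : E} (ha : a ∈ polarCone C) (hb : b ∈ polarCone C) :
    a + b ∈ polarCone C := by
  intro w hw
  have h1 := ha w hw
  have h2 := hb w hw
  rw [inner_add_left]; linarith

lemma polar_smul {E : Type*} [NormedAddCommGroup E] [InnerProductSpace ℝ E]
    {C : Set E} {a : E} {s : ℝ} (hs : 0 ≤ s) (ha : a ∈ polarCone C) :
    s • a ∈ polarCone C := by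
  intro w hw
  rw [real_inner_smul_left]
  exact mul_nonpos_of_nonneg_of_nonpos hs (ha w hw)

lemma cone_add {n : ℕ} {κ : ℝ} {X : Set (EuclideanSpace ℝ (Fin n))}
    (hXcv : Convex ℝ X) {a b : EuclideanSpace ℝ (Fin (n + 1))}
    (ha : a ∈ coneLift κ X) (hb : b ∈ coneLift κ X) : a + b ∈ coneLift κ X := by
  obtain ⟨α, hα, p, hp, rfl⟩ := ha
  obtain ⟨β, hβ, q, hq, rfl⟩ := hb
  by_cases h : α + β = 0
  · have hα0 : α = 0 := by linarith
    have hβ0 : β = 0 := by linarith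
    exact ⟨0, le_rfl, p, hp, by simp [hα0, hβ0]⟩
  · have hpos : 0 < α + β := lt_of_le_of_ne (by linarith) (Ne.symm h)
    refine ⟨α + β, hpos.le, (α / (α + β)) • p + (β / (α + β)) • q,
      hXcv hp hq (div_nonneg hα hpos.le) (div_nonneg hβ hpos.le) (by field_simp), ?_⟩
    ext i
    refine Fin.cases ?_ (fun j => ?_) i
    · simp only [pr, PiLp.add_apply, PiLp.smul_apply, Fin.cons_zero, smul_eq_mul]
      ring
    · simp only [pr, PiLp.add_apply, PiLp.smul_apply, Fin.cons_succ, smul_eq_mul]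
      field_simp

lemma neg_mem_polar {n : ℕ} {κ : ℝ} {X : Set (EuclideanSpace ℝ (Fin n))}
    (hκ : IsGreatest ((fun x => ‖x‖) '' X) κ) {a : EuclideanSpace ℝ (Fin (n + 1))}
    (ha : a ∈ coneLift κ X) : -a ∈ polarCone (coneLift κ X) := by
  obtain ⟨β, hβ, q, hq, rfl⟩ := ha
  rintro w ⟨α, hα, p, hp, rfl⟩
  rw [inner_neg_left, real_inner_smul_left, real_inner_smul_right, inner_pr]
  have h1 : ‖p‖ ≤ κ := hκ.2 ⟨p, hp, rfl⟩
  have h2 : ‖q‖ ≤ κ := hκ.2 ⟨q, hq, rfl⟩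
  have h3 : |⟪q, p⟫| ≤ ‖q‖ * ‖p‖ := abs_real_inner_le_norm q p
  have h4 := abs_le.1 h3
  have h5 : ‖q‖ * ‖p‖ ≤ κ * κ :=
    mul_le_mul h2 h1 (norm_nonneg p) ((norm_nonneg q).trans h2)
  have h6 : (0:ℝ) ≤ κ * κ + ⟪q, p⟫ := by linarith [h4.1]
  nlinarith [mul_nonneg (mul_nonneg hβ hα) h6]

lemma residual_mem_polar {E : Type*} [NormedAddCommGroup E] [InnerProductSpace ℝ E]
    {C : Set E} (hadd : ∀ a ∈ C, ∀ b ∈ C, a + b ∈ C)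
    (hsmul : ∀ s : ℝ, 0 ≤ s → ∀ a ∈ C, s • a ∈ C)
    {y p : E} (hp : IsProjOn y C p) : y - p ∈ polarCone C := by
  intro w hw
  by_contra hc
  push_neg at hc
  set c := ⟪y - p, w⟫ with hcdef
  have hwne : w ≠ 0 := by
    rintro rfl
    simp [hcdef] at hc
  have hwpos : 0 < ‖w‖ := norm_pos_iff.mpr hwne
  have hwn : (0:ℝ) < ‖w‖ ^ 2 := by positivity
  set s := c / ‖w‖ ^ 2 with hsdef
  have hs : 0 < s := div_pos hc hwn
  have hmem : p + s • w ∈ C := hadd p hp.1 _ (hsmul s hs.le w hw)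
  have hd := hp.2 _ hmem
  rw [dist_eq_norm, dist_eq_norm] at hd
  have hre : y - (p + s • w) = (y - p) - s • w := by abel
  rw [hre] at hd
  have hsq : ‖y - p‖ ^ 2 ≤ ‖(y - p) - s • w‖ ^ 2 :=
    pow_le_pow_left₀ (norm_nonneg _) hd 2
  have hexp : ‖(y - p) - s • w‖ ^ 2 = ‖y - p‖ ^ 2 - 2 * (s * c) + s ^ 2 * ‖w‖ ^ 2 := by
    rw [norm_sub_sq_real, real_inner_smul_right, norm_smul, Real.norm_eq_abs,
      mul_pow, sq_abs, ← hcdef]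
  have hc2 : s * ‖w‖ ^ 2 = c := div_mul_cancel₀ c (ne_of_gt hwn)
  nlinarith [mul_pos hs hc]

/-- key step of Theorem 3: for CBA⁺ iterates
`u_t = π_C(u_{t-1} + ω_t v_t)` with payoff weights `ω` and decision weights `θ`
satisfying `θ_{t+1}/θ_t ≥ ω_{t+1}/ω_t`, one has
`∑ θ_t v_t − (θ_T/ω_T) u_T ∈ C°`, i.e. `∑ θ_t v_t ≥_{C°} (θ_T/ω_T) u_T`. -/
theorem stmt6 {n : ℕ} (X : Set (EuclideanSpace ℝ (Fin n)))
    (hXne : X.Nonempty) (hXcv : Convex ℝ X) (hXcp : IsCompact X)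
    (κ : ℝ) (hκ : IsGreatest ((fun x => ‖x‖) '' X) κ) (hκpos : 0 < κ)
    (ω θ : ℕ → ℝ) (hω : ∀ t ≥ 1, 0 < ω t) (hθ : ∀ t ≥ 1, 0 < θ t)
    (hrat : ∀ t ≥ 1, ω (t + 1) / ω t ≤ θ (t + 1) / θ t)
    (T : ℕ) (hT : 1 ≤ T)
    (f x : ℕ → EuclideanSpace ℝ (Fin n)) (hx : ∀ t ∈ Icc 1 T, x t ∈ X)
    (v : ℕ → EuclideanSpace ℝ (Fin (n + 1)))
    (hv : ∀ t, v t = pr (⟪f t, x t⟫ / κ) (-(f t)))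
    (u : ℕ → EuclideanSpace ℝ (Fin (n + 1))) (hu0 : u 0 = 0)
    (hu : ∀ t ∈ Icc 1 T, IsProjOn (u (t - 1) + ω t • v t) (coneLift κ X) (u t)) :
    (∑ t ∈ Icc 1 T, θ t • v t) - (θ T / ω T) • u T ∈ polarCone (coneLift κ X) := by
  have hCadd : ∀ a ∈ coneLift κ X, ∀ b ∈ coneLift κ X, a + b ∈ coneLift κ X :=
    fun a ha b hb => cone_add hXcv ha hb
  have hCsmul : ∀ s : ℝ, 0 ≤ s → ∀ a ∈ coneLift κ X, s • a ∈ coneLift κ X := by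
    rintro s hs a ⟨α, hα, p, hp, rfl⟩
    exact ⟨s * α, mul_nonneg hs hα, p, hp, by rw [smul_smul]⟩
  suffices H : ∀ k, 1 ≤ k → k ≤ T →
      (∑ t ∈ Icc 1 k, θ t • v t) - (θ k / ω k) • u k ∈ polarCone (coneLift κ X) from
    H T hT le_rfl
  intro k hk1
  induction k, hk1 using Nat.le_induction with
  | base =>
    intro hkT
    have h1 := hu 1 (mem_Icc.mpr ⟨le_rfl, hkT⟩)
    rw [show (1:ℕ) - 1 = 0 from rfl, hu0, zero_add] at h1
    have hres := residual_mem_polar hCadd hCsmul h1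
    have hω1 : ω 1 ≠ 0 := (hω 1 le_rfl).ne'
    have heq : (∑ t ∈ Icc 1 1, θ t • v t) - (θ 1 / ω 1) • u 1
        = (θ 1 / ω 1) • (ω 1 • v 1 - u 1) := by
      rw [Finset.Icc_self, Finset.sum_singleton, smul_sub, smul_smul,
        div_mul_cancel₀ _ hω1]
    rw [heq]
    exact polar_smul (div_nonneg (hθ 1 le_rfl).le (hω 1 le_rfl).le) hres
  | succ k hk IH =>
    intro hkT
    have hkT' : k ≤ T := by omega
    have IH' := IH hkT'
    have hωk := hω k hk
    have hωk1 := hω (k+1) (by omega)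
    have hθk := hθ k hk
    have hθk1 := hθ (k+1) (by omega)
    have hρ : θ k / ω k ≤ θ (k+1) / ω (k+1) := by
      have h := hrat k hk
      rw [div_le_div_iff₀ hωk hθk] at h
      rw [div_le_div_iff₀ hωk hωk1]
      nlinarith
    have hproj := hu (k+1) (mem_Icc.mpr ⟨by omega, hkT⟩)
    rw [Nat.add_sub_cancel] at hproj
    have huk : u k ∈ coneLift κ X := (hu k (mem_Icc.mpr ⟨hk, hkT'⟩)).1
    have hres := residual_mem_polar hCadd hCsmul hproj
    have key : (∑ t ∈ Icc 1 (k+1), θ t • v t) - (θ (k+1) / ω (k+1)) • u (k+1)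
        = ((∑ t ∈ Icc 1 k, θ t • v t) - (θ k / ω k) • u k)
          + (θ (k+1) / ω (k+1)) • (u k + ω (k+1) • v (k+1) - u (k+1))
          + (θ (k+1) / ω (k+1) - θ k / ω k) • (-(u k)) := by
      rw [Finset.sum_Icc_succ_top (by omega : 1 ≤ k + 1),
        show θ (k+1) • v (k+1) = (θ (k+1) / ω (k+1)) • ω (k+1) • v (k+1) by
          rw [smul_smul, div_mul_cancel₀ _ hωk1.ne']]
      module
    rw [key]
    exact polar_add (polar_add IH'
        (polar_smul (div_nonneg hθk1.le hωk1.le) hres))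
      (polar_smul (sub_nonneg.2 hρ) (neg_mem_polar hκ huk))

end
end

section
/- Let X ⊆ ℝⁿ be a nonempty convex compact set with κ = max_{x∈X} ‖x‖₂ > 0 and C = cone({κ} × X) ⊆ ℝ^{n+1}. Let positive weights (ω_t), losses f_t ∈ ℝⁿ and decisions x_t ∈ X for t = 1,…,T, with v_t = (⟨f_t, x_t⟩/κ, −f_t), CBA⁺ iterates u_0 = 0 and u_t = π_C(u_{t−1} + ω_t v_t), and the CBA⁺ choice rule: for every t there exists β_t ≥ 0 with u_{t−1} = β_t · (κ, x_t). Then ‖u_T‖₂² ≤ ∑_{t=1}^T ω_t² ‖v_t‖₂²; in particular, if ‖f_t‖₂ ≤ L for all t then ‖u_T‖₂ ≤ √2 · L · √(∑_{t=1}^T ω_t²). -/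
set_option autoImplicit false

open scoped RealInnerProductSpace
open Finset

noncomputable section

/-- Projection onto a set closed under nonnegative scaling does not increase the norm. -/
lemma proj_norm_le {E : Type*} [NormedAddCommGroup E] [InnerProductSpace ℝ E]
    (S : Set E) (hS : ∀ c : ℝ, 0 ≤ c → ∀ p ∈ S, c • p ∈ S)
    (w p : E) (h : IsProjOn w S p) : ‖p‖ ≤ ‖w‖ := by
  obtain ⟨hpS, hmin⟩ := h
  have key : ∀ c : ℝ, 0 ≤ c →
      ‖w‖ ^ 2 - 2 * ⟪w, p⟫ + ‖p‖ ^ 2 ≤ ‖w‖ ^ 2 - 2 * c * ⟪w, p⟫ + c ^ 2 * ‖p‖ ^ 2 := by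
    intro c hc
    have h1 : dist w p ≤ dist w (c • p) := hmin _ (hS c hc p hpS)
    have h2 : ‖w - p‖ ^ 2 ≤ ‖w - c • p‖ ^ 2 := by
      rw [dist_eq_norm, dist_eq_norm] at h1
      exact pow_le_pow_left₀ (norm_nonneg _) h1 2
    have e1 : ‖w - p‖ ^ 2 = ‖w‖ ^ 2 - 2 * ⟪w, p⟫ + ‖p‖ ^ 2 := norm_sub_sq_real w p
    have e2 : ‖w - c • p‖ ^ 2 = ‖w‖ ^ 2 - 2 * c * ⟪w, p⟫ + c ^ 2 * ‖p‖ ^ 2 := by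
      rw [norm_sub_sq_real, real_inner_smul_right, norm_smul]
      simp only [Real.norm_eq_abs, mul_pow, sq_abs]
      ring
    rw [e1, e2] at h2
    exact h2
  by_cases hp0 : ‖p‖ = 0
  · rw [hp0]; exact norm_nonneg w
  have hppos : 0 < ‖p‖ := lt_of_le_of_ne (norm_nonneg p) (Ne.symm hp0)
  have hrpos : 0 < ‖p‖ ^ 2 := by positivity
  set a : ℝ := ⟪w, p⟫ with ha
  set r : ℝ := ‖p‖ ^ 2 with hr
  have h0 : r ≤ 2 * a := by have := key 0 le_rfl; nlinarith
  have hapos : 0 < a := by nlinarith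
  have heq : -(2 * (a / r) * a) + (a / r) ^ 2 * r = -(a ^ 2) / r := by
    field_simp; ring
  have h6 : -(2 * a) + r ≤ -(a ^ 2) / r := by
    have hk := key (a / r) (by positivity)
    linarith [heq]
  have h7 : (-(2 * a) + r) * r ≤ (-(a ^ 2) / r) * r :=
    mul_le_mul_of_nonneg_right h6 (le_of_lt hrpos)
  have h8 : (-(a ^ 2) / r) * r = -(a ^ 2) := by field_simp
  have hra : r = a := by nlinarith [sq_nonneg (r - a)]
  have hcs : a ≤ ‖w‖ * ‖p‖ := real_inner_le_norm w p
  nlinarith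

/-- norm bound in the proof of Theorem 3: for CBA⁺ iterates
`u_t = π_C(u_{t-1} + ω_t v_t)` with the CBA⁺ choice rule `u_{t-1} = β_t • (κ, x_t)`,
one has `‖u_T‖₂² ≤ ∑ ω_t² ‖v_t‖₂²`; in particular `‖u_T‖₂ ≤ √2 L √(∑ ω_t²)`
when `‖f_t‖₂ ≤ L`. -/
theorem stmt7 {n : ℕ} (X : Set (EuclideanSpace ℝ (Fin n)))
    (hXne : X.Nonempty) (hXcv : Convex ℝ X) (hXcp : IsCompact X)
    (κ : ℝ) (hκ : IsGreatest ((fun x => ‖x‖) '' X) κ) (hκpos : 0 < κ)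
    (T : ℕ) (hT : 1 ≤ T)
    (ω : ℕ → ℝ) (hω : ∀ t ∈ Icc 1 T, 0 < ω t)
    (f x : ℕ → EuclideanSpace ℝ (Fin n)) (hx : ∀ t ∈ Icc 1 T, x t ∈ X)
    (L : ℝ) (hL : ∀ t ∈ Icc 1 T, ‖f t‖ ≤ L)
    (v : ℕ → EuclideanSpace ℝ (Fin (n + 1)))
    (hv : ∀ t, v t = pr (⟪f t, x t⟫ / κ) (-(f t)))
    (u : ℕ → EuclideanSpace ℝ (Fin (n + 1))) (hu0 : u 0 = 0)
    (hu : ∀ t ∈ Icc 1 T, IsProjOn (u (t - 1) + ω t • v t) (coneLift κ X) (u t))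
    (hchoice : ∀ t ∈ Icc 1 T, ∃ β : ℝ, 0 ≤ β ∧ u (t - 1) = β • pr κ (x t)) :
    ‖u T‖ ^ 2 ≤ (∑ t ∈ Icc 1 T, ω t ^ 2 * ‖v t‖ ^ 2) ∧
      ‖u T‖ ≤ Real.sqrt 2 * L * Real.sqrt (∑ t ∈ Icc 1 T, ω t ^ 2) := by
  -- the cone is closed under nonnegative scaling
  have hcone : ∀ c : ℝ, 0 ≤ c → ∀ p ∈ coneLift κ X, c • p ∈ coneLift κ X := by
    rintro c hc p ⟨α, hα, y, hy, rfl⟩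
    exact ⟨c * α, mul_nonneg hc hα, y, hy, smul_smul c α _⟩
  -- forcing identity
  have hforce : ∀ t ∈ Icc 1 T, ⟪u (t - 1), v t⟫ = 0 := by
    intro t ht
    obtain ⟨β, hβ, huβ⟩ := hchoice t ht
    rw [huβ, hv t, real_inner_smul_left, inner_pr]
    have : κ * (⟪f t, x t⟫ / κ) = ⟪f t, x t⟫ := by
      field_simp
    rw [this, inner_neg_right, real_inner_comm (x t) (f t)]
    ring
  -- the one-step bound
  have hstep : ∀ t ∈ Icc 1 T,
      ‖u t‖ ^ 2 ≤ ‖u (t - 1)‖ ^ 2 + ω t ^ 2 * ‖v t‖ ^ 2 := by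
    intro t ht
    have h1 : ‖u t‖ ≤ ‖u (t - 1) + ω t • v t‖ :=
      proj_norm_le _ hcone _ _ (hu t ht)
    have h2 : ‖u t‖ ^ 2 ≤ ‖u (t - 1) + ω t • v t‖ ^ 2 :=
      pow_le_pow_left₀ (norm_nonneg _) h1 2
    have e : ‖u (t - 1) + ω t • v t‖ ^ 2
        = ‖u (t - 1)‖ ^ 2 + ω t ^ 2 * ‖v t‖ ^ 2 := by
      rw [norm_add_sq_real, real_inner_smul_right, hforce t ht, norm_smul]
      simp only [Real.norm_eq_abs, mul_pow, sq_abs]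
      ring
    rw [e] at h2
    exact h2
  -- induction
  have key : ∀ t : ℕ, t ≤ T → ‖u t‖ ^ 2 ≤ ∑ s ∈ Icc 1 t, ω s ^ 2 * ‖v s‖ ^ 2 := by
    intro t
    induction t with
    | zero => intro _; simp [hu0]
    | succ m ih =>
      intro hmT
      have hm : m ≤ T := Nat.le_of_succ_le hmT
      have hmem : m + 1 ∈ Icc 1 T := by
        simp [Nat.succ_le_iff]; omega
      have h1 := hstep (m + 1) hmem
      simp only [Nat.add_sub_cancel] at h1
      have h2 := ih hm
      rw [Finset.sum_Icc_succ_top (by omega : 1 ≤ m + 1)]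
      linarith
  have part1 := key T le_rfl
  refine ⟨part1, ?_⟩
  -- bound ‖v t‖² ≤ 2 L²
  have hL0 : 0 ≤ L := le_trans (norm_nonneg (f 1)) (hL 1 (by simp; omega))
  have hv2 : ∀ t ∈ Icc 1 T, ‖v t‖ ^ 2 ≤ 2 * L ^ 2 := by
    intro t ht
    have e : ‖v t‖ ^ 2 = (⟪f t, x t⟫ / κ) ^ 2 + ‖f t‖ ^ 2 := by
      rw [← real_inner_self_eq_norm_sq, hv t, inner_pr]
      rw [inner_neg_neg, real_inner_self_eq_norm_sq]
      ring
    have hxκ : ‖x t‖ ≤ κ := hκ.2 ⟨x t, hx t ht, rfl⟩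
    have hcs : |⟪f t, x t⟫| ≤ ‖f t‖ * ‖x t‖ := abs_real_inner_le_norm _ _
    have hft : ‖f t‖ ≤ L := hL t ht
    have h1 : (⟪f t, x t⟫ / κ) ^ 2 ≤ ‖f t‖ ^ 2 := by
      rw [div_pow]
      rw [div_le_iff₀ (by positivity)]
      have : ⟪f t, x t⟫ ^ 2 ≤ (‖f t‖ * ‖x t‖) ^ 2 := by
        rw [← sq_abs]
        exact pow_le_pow_left₀ (abs_nonneg _) hcs 2
      have hxn : ‖x t‖ ^ 2 ≤ κ ^ 2 := pow_le_pow_left₀ (norm_nonneg _) hxκ 2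
      nlinarith [norm_nonneg (f t)]
    have h2 : ‖f t‖ ^ 2 ≤ L ^ 2 := pow_le_pow_left₀ (norm_nonneg _) hft 2
    nlinarith
  have hsum : (∑ t ∈ Icc 1 T, ω t ^ 2 * ‖v t‖ ^ 2)
      ≤ 2 * L ^ 2 * ∑ t ∈ Icc 1 T, ω t ^ 2 := by
    rw [Finset.mul_sum]
    apply Finset.sum_le_sum
    intro t ht
    have := hv2 t ht
    have hω2 : 0 ≤ ω t ^ 2 := sq_nonneg _
    nlinarith
  have hfin : ‖u T‖ ^ 2 ≤ 2 * L ^ 2 * ∑ t ∈ Icc 1 T, ω t ^ 2 := le_trans part1 hsum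
  have hsqnn : 0 ≤ ∑ t ∈ Icc 1 T, ω t ^ 2 := Finset.sum_nonneg fun t _ => sq_nonneg _
  calc ‖u T‖ = Real.sqrt (‖u T‖ ^ 2) := by
        rw [Real.sqrt_sq (norm_nonneg _)]
    _ ≤ Real.sqrt (2 * L ^ 2 * ∑ t ∈ Icc 1 T, ω t ^ 2) := Real.sqrt_le_sqrt hfin
    _ = Real.sqrt 2 * L * Real.sqrt (∑ t ∈ Icc 1 T, ω t ^ 2) := by
        rw [Real.sqrt_mul (by positivity), Real.sqrt_mul (by norm_num),
          Real.sqrt_sq hL0]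

end
end

section
/- Let X ⊆ ℝⁿ and Y ⊆ ℝᵐ be nonempty convex compact sets and F : X × Y → ℝ be convex in its first argument and concave in its second. Let T ≥ 1 and nonnegative weights θ_2,…,θ_{T+1} with S_T = ∑_{t=1}^T θ_{t+1} > 0. Let x_1,…,x_{T+1} ∈ X, y_1,…,y_T ∈ Y, and for each t = 1,…,T let f_t ∈ ℝⁿ be a subgradient of F(·, y_t) at x_t and g_t ∈ ℝᵐ a supergradient of F(x_{t+1}, ·) at y_t. Set x̄_T = (1/S_T)∑_{t=1}^T θ_{t+1} x_{t+1} and ȳ_T = (1/S_T)∑_{t=1}^T θ_{t+1} y_t. Then sup_{y∈Y} F(x̄_T, y) − inf_{x∈X} F(x, ȳ_T) ≤ (1/S_T)·[ (sup_{y∈Y} ∑_{t=1}^T θ_{t+1}⟨g_t, y⟩ − ∑_{t=1}^T θ_{t+1}⟨g_t, y_t⟩) + (∑_{t=1}^T θ_{t+1}⟨f_t, x_t⟩ − inf_{x∈X} ∑_{t=1}^T θ_{t+1}⟨f_t, x⟩) + ∑_{t=1}^T θ_{t+1}(F(x_{t+1}, y_t) − F(x_t, y_t)) ]. -/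
set_option autoImplicit false

open scoped RealInnerProductSpace
open Finset

/-- Theorem 5: duality-gap bound for the repeated game framework
with alternation. Here `x̄_T = (1/S_T) ∑ θ_{t+1} x_{t+1}`,
`ȳ_T = (1/S_T) ∑ θ_{t+1} y_t`, and the extra term
`∑ θ_{t+1} (F(x_{t+1}, y_t) − F(x_t, y_t))` accounts for the alternation. -/
theorem stmt11 {n m : ℕ}
    (X : Set (EuclideanSpace ℝ (Fin n))) (Y : Set (EuclideanSpace ℝ (Fin m)))
    (hXne : X.Nonempty) (hXcv : Convex ℝ X) (hXcp : IsCompact X)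
    (hYne : Y.Nonempty) (hYcv : Convex ℝ Y) (hYcp : IsCompact Y)
    (F : EuclideanSpace ℝ (Fin n) → EuclideanSpace ℝ (Fin m) → ℝ)
    (hFcv : ∀ y ∈ Y, ConvexOn ℝ X (fun x => F x y))
    (hFcc : ∀ x ∈ X, ConcaveOn ℝ Y (fun y => F x y))
    (T : ℕ) (hT : 1 ≤ T)
    (θ : ℕ → ℝ) (hθ : ∀ t ∈ Icc 1 T, 0 ≤ θ (t + 1))
    (hS : 0 < ∑ t ∈ Icc 1 T, θ (t + 1))
    (x : ℕ → EuclideanSpace ℝ (Fin n)) (y : ℕ → EuclideanSpace ℝ (Fin m))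
    (f : ℕ → EuclideanSpace ℝ (Fin n)) (g : ℕ → EuclideanSpace ℝ (Fin m))
    (hx : ∀ t ∈ Icc 1 (T + 1), x t ∈ X) (hy : ∀ t ∈ Icc 1 T, y t ∈ Y)
    -- `f t` is a subgradient of `F(·, y t)` at `x t`
    (hf : ∀ t ∈ Icc 1 T, ∀ x' ∈ X, F (x t) (y t) + ⟪f t, x' - x t⟫ ≤ F x' (y t))
    -- `g t` is a supergradient of `F(x (t+1), ·)` at `y t`
    (hg : ∀ t ∈ Icc 1 T, ∀ y' ∈ Y,
      F (x (t + 1)) y' ≤ F (x (t + 1)) (y t) + ⟪g t, y' - y t⟫) :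
    (⨆ yy : Y,
        F ((∑ t ∈ Icc 1 T, θ (t + 1))⁻¹ • ∑ t ∈ Icc 1 T, θ (t + 1) • x (t + 1)) yy)
      - (⨅ xx : X,
          F xx ((∑ t ∈ Icc 1 T, θ (t + 1))⁻¹ • ∑ t ∈ Icc 1 T, θ (t + 1) • y t))
    ≤ (∑ t ∈ Icc 1 T, θ (t + 1))⁻¹ *
        (((⨆ yy : Y, ∑ t ∈ Icc 1 T, θ (t + 1) * ⟪g t, (yy : EuclideanSpace ℝ (Fin m))⟫)
            - ∑ t ∈ Icc 1 T, θ (t + 1) * ⟪g t, y t⟫)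
          + ((∑ t ∈ Icc 1 T, θ (t + 1) * ⟪f t, x t⟫)
            - ⨅ xx : X, ∑ t ∈ Icc 1 T, θ (t + 1) * ⟪f t, (xx : EuclideanSpace ℝ (Fin n))⟫)
          + ∑ t ∈ Icc 1 T, θ (t + 1) * (F (x (t + 1)) (y t) - F (x t) (y t))) := by

  classical
  haveI : Nonempty ↥Y := hYne.to_subtype
  haveI : Nonempty ↥X := hXne.to_subtype
  set S : ℝ := ∑ t ∈ Icc 1 T, θ (t + 1) with hSdef
  set w : ℕ → ℝ := fun t => θ (t + 1) / S with hwdef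
  have hSne : S ≠ 0 := ne_of_gt hS
  have hSinv : (0:ℝ) ≤ S⁻¹ := inv_nonneg.mpr hS.le
  have hw0 : ∀ t ∈ Icc 1 T, 0 ≤ w t := fun t ht => div_nonneg (hθ t ht) hS.le
  have hw1 : ∑ t ∈ Icc 1 T, w t = 1 := by
    simp only [hwdef]
    rw [← Finset.sum_div, ← hSdef, div_self hSne]
  have hmemx : ∀ t ∈ Icc 1 T, x (t + 1) ∈ X := by
    intro t ht
    apply hx
    simp only [Finset.mem_Icc] at ht ⊢
    omega
  have hxbar : S⁻¹ • ∑ t ∈ Icc 1 T, θ (t + 1) • x (t + 1)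
      = ∑ t ∈ Icc 1 T, w t • x (t + 1) := by
    rw [Finset.smul_sum]
    refine Finset.sum_congr rfl fun t ht => ?_
    rw [smul_smul]
    congr 1
    simp only [hwdef]
    rw [div_eq_inv_mul]
  have hybar : S⁻¹ • ∑ t ∈ Icc 1 T, θ (t + 1) • y t
      = ∑ t ∈ Icc 1 T, w t • y t := by
    rw [Finset.smul_sum]
    refine Finset.sum_congr rfl fun t ht => ?_
    rw [smul_smul]
    congr 1
    simp only [hwdef]
    rw [div_eq_inv_mul]
  rw [hxbar, hybar]
  set xb : EuclideanSpace ℝ (Fin n) := ∑ t ∈ Icc 1 T, w t • x (t + 1) with hxbdef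
  set yb : EuclideanSpace ℝ (Fin m) := ∑ t ∈ Icc 1 T, w t • y t with hybdef
  have hxbX : xb ∈ X := hXcv.sum_mem hw0 hw1 hmemx
  have hybY : yb ∈ Y := hYcv.sum_mem hw0 hw1 hy
  -- boundedness of the linear sup/inf
  have hGb : BddAbove (Set.range fun yy : Y =>
      ∑ t ∈ Icc 1 T, θ (t + 1) * ⟪g t, (yy : EuclideanSpace ℝ (Fin m))⟫) := by
    have h1 : BddAbove ((fun yy => ∑ t ∈ Icc 1 T, θ (t + 1) * ⟪g t, yy⟫) '' Y) := by
      refine hYcp.bddAbove_image (Continuous.continuousOn ?_)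
      exact continuous_finset_sum _ fun t _ =>
        continuous_const.mul (continuous_const.inner continuous_id)
    obtain ⟨b, hb⟩ := h1
    refine ⟨b, ?_⟩
    rintro r ⟨yy, rfl⟩
    exact hb (Set.mem_image_of_mem _ yy.2)
  have hIb : BddBelow (Set.range fun xx : X =>
      ∑ t ∈ Icc 1 T, θ (t + 1) * ⟪f t, (xx : EuclideanSpace ℝ (Fin n))⟫) := by
    have h1 : BddBelow ((fun xx => ∑ t ∈ Icc 1 T, θ (t + 1) * ⟪f t, xx⟫) '' X) := by
      refine hXcp.bddBelow_image (Continuous.continuousOn ?_)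
      exact continuous_finset_sum _ fun t _ =>
        continuous_const.mul (continuous_const.inner continuous_id)
    obtain ⟨b, hb⟩ := h1
    refine ⟨b, ?_⟩
    rintro r ⟨xx, rfl⟩
    exact hb (Set.mem_image_of_mem _ xx.2)
  set G : ℝ := ⨆ yy : Y, ∑ t ∈ Icc 1 T, θ (t + 1) * ⟪g t, (yy : EuclideanSpace ℝ (Fin m))⟫
    with hGdef
  set I : ℝ := ⨅ xx : X, ∑ t ∈ Icc 1 T, θ (t + 1) * ⟪f t, (xx : EuclideanSpace ℝ (Fin n))⟫
    with hIdef
  set P : ℝ := ∑ t ∈ Icc 1 T, θ (t + 1) * F (x (t + 1)) (y t) with hPdef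
  set R : ℝ := ∑ t ∈ Icc 1 T, θ (t + 1) * F (x t) (y t) with hRdef
  set Q : ℝ := ∑ t ∈ Icc 1 T, θ (t + 1) * ⟪g t, y t⟫ with hQdef
  set W : ℝ := ∑ t ∈ Icc 1 T, θ (t + 1) * ⟪f t, x t⟫ with hWdef
  -- upper bound on the sup
  have hsup : (⨆ yy : Y, F xb yy) ≤ S⁻¹ * (P + G - Q) := by
    refine ciSup_le fun yy => ?_
    obtain ⟨y', hy'⟩ := yy
    have step1 : F xb y' ≤ ∑ t ∈ Icc 1 T, w t * F (x (t + 1)) y' := by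
      have := (hFcv y' hy').map_sum_le hw0 hw1 hmemx
      simpa [smul_eq_mul] using this
    have step2 : ∑ t ∈ Icc 1 T, w t * F (x (t + 1)) y'
        ≤ ∑ t ∈ Icc 1 T, w t * (F (x (t + 1)) (y t) + (⟪g t, y'⟫ - ⟪g t, y t⟫)) := by
      refine Finset.sum_le_sum fun t ht => ?_
      have h1 := hg t ht y' hy'
      rw [inner_sub_right] at h1
      exact mul_le_mul_of_nonneg_left h1 (hw0 t ht)
    have step3 : ∑ t ∈ Icc 1 T, w t * (F (x (t + 1)) (y t) + (⟪g t, y'⟫ - ⟪g t, y t⟫))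
        = S⁻¹ * (P + (∑ t ∈ Icc 1 T, θ (t + 1) * ⟪g t, y'⟫) - Q) := by
      have e : ∀ t ∈ Icc 1 T, w t * (F (x (t + 1)) (y t) + (⟪g t, y'⟫ - ⟪g t, y t⟫))
          = S⁻¹ * (θ (t + 1) * F (x (t + 1)) (y t)) + S⁻¹ * (θ (t + 1) * ⟪g t, y'⟫)
            - S⁻¹ * (θ (t + 1) * ⟪g t, y t⟫) := fun t ht => by
        simp only [hwdef]
        rw [div_eq_inv_mul]
        ring
      rw [Finset.sum_congr rfl e, Finset.sum_sub_distrib, Finset.sum_add_distrib,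
        ← Finset.mul_sum, ← Finset.mul_sum, ← Finset.mul_sum, hPdef, hQdef]
      ring
    have step4 : (∑ t ∈ Icc 1 T, θ (t + 1) * ⟪g t, y'⟫) ≤ G :=
      le_ciSup hGb ⟨y', hy'⟩
    calc F xb y' ≤ S⁻¹ * (P + (∑ t ∈ Icc 1 T, θ (t + 1) * ⟪g t, y'⟫) - Q) := by
          rw [← step3]; exact le_trans step1 step2
      _ ≤ S⁻¹ * (P + G - Q) := by
          apply mul_le_mul_of_nonneg_left _ hSinv
          linarith
  -- lower bound on the inf
  have hinf : S⁻¹ * (R + I - W) ≤ ⨅ xx : X, F xx yb := by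
    refine le_ciInf fun xx => ?_
    obtain ⟨x', hx'⟩ := xx
    have step1 : ∑ t ∈ Icc 1 T, w t * F x' (y t) ≤ F x' yb := by
      have := (hFcc x' hx').le_map_sum hw0 hw1 hy
      simpa [smul_eq_mul] using this
    have step2 : ∑ t ∈ Icc 1 T, w t * (F (x t) (y t) + (⟪f t, x'⟫ - ⟪f t, x t⟫))
        ≤ ∑ t ∈ Icc 1 T, w t * F x' (y t) := by
      refine Finset.sum_le_sum fun t ht => ?_
      have h1 := hf t ht x' hx'
      rw [inner_sub_right] at h1
      exact mul_le_mul_of_nonneg_left (by linarith) (hw0 t ht)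
    have step3 : ∑ t ∈ Icc 1 T, w t * (F (x t) (y t) + (⟪f t, x'⟫ - ⟪f t, x t⟫))
        = S⁻¹ * (R + (∑ t ∈ Icc 1 T, θ (t + 1) * ⟪f t, x'⟫) - W) := by
      have e : ∀ t ∈ Icc 1 T, w t * (F (x t) (y t) + (⟪f t, x'⟫ - ⟪f t, x t⟫))
          = S⁻¹ * (θ (t + 1) * F (x t) (y t)) + S⁻¹ * (θ (t + 1) * ⟪f t, x'⟫)
            - S⁻¹ * (θ (t + 1) * ⟪f t, x t⟫) := fun t ht => by
        simp only [hwdef]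
        rw [div_eq_inv_mul]
        ring
      rw [Finset.sum_congr rfl e, Finset.sum_sub_distrib, Finset.sum_add_distrib,
        ← Finset.mul_sum, ← Finset.mul_sum, ← Finset.mul_sum, hRdef, hWdef]
      ring
    have step4 : I ≤ ∑ t ∈ Icc 1 T, θ (t + 1) * ⟪f t, x'⟫ :=
      ciInf_le hIb ⟨x', hx'⟩
    calc S⁻¹ * (R + I - W) ≤ S⁻¹ * (R + (∑ t ∈ Icc 1 T, θ (t + 1) * ⟪f t, x'⟫) - W) := by
          apply mul_le_mul_of_nonneg_left _ hSinv
          linarith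
      _ ≤ F x' yb := by rw [← step3]; exact le_trans step2 step1
  have hPR : ∑ t ∈ Icc 1 T, θ (t + 1) * (F (x (t + 1)) (y t) - F (x t) (y t)) = P - R := by
    rw [hPdef, hRdef, ← Finset.sum_sub_distrib]
    exact Finset.sum_congr rfl fun t ht => by ring
  calc (⨆ yy : Y, F xb yy) - ⨅ xx : X, F xx yb
      ≤ S⁻¹ * (P + G - Q) - S⁻¹ * (R + I - W) := sub_le_sub hsup hinf
    _ = S⁻¹ * ((G - Q) + (W - I)
          + ∑ t ∈ Icc 1 T, θ (t + 1) * (F (x (t + 1)) (y t) - F (x t) (y t))) := by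
        rw [hPR]; ring
end
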